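/- With A(f) = {x : ∃ L, ∀ n, f^{n+L}(x) ∉ T(f^n(B(0,R)))} for a continuous open map f satisfying the covering property (1a), the set A(f) is completely invariant: x ∈ A(f) if and only if f(x) ∈ A(f). -/

import Mathlib

open Set Metric Filter Bornology Topology

noncomputable section

/-- Šura-Bura: in a compact T2 space, a connected component contained in an open set
is contained in a clopen subset of that open set. -/
theorem exists_isClopen_subset_of_connectedComponent_subset
    {α : Type*} [TopologicalSpace α] [T2Space α] [CompactSpace α] {x : α} {O : Set α}
    (hO : IsOpen O) (h : connectedComponent x ⊆ O) :
    ∃ Q : Set α, IsClopen Q ∧ connectedComponent x ⊆ Q ∧ Q ⊆ O := by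
  have hc : IsCompact Oᶜ := hO.isClosed_compl.isCompact
  have hcover : Oᶜ ⊆ ⋃ s : { s : Set α // IsClopen s ∧ x ∈ s }, (↑s : Set α)ᶜ := by
    intro z hz
    by_contra hz'
    simp only [mem_iUnion, mem_compl_iff, not_exists, not_not] at hz'
    have : z ∈ connectedComponent x := by
      rw [connectedComponent_eq_iInter_isClopen x, mem_iInter]
      exact fun s => hz' s
    exact hz (h this)
  obtain ⟨t, ht⟩ := hc.elim_finite_subcover _ (fun s => s.2.1.compl.isOpen) hcover
  refine ⟨⋂ s ∈ t, (s : Set α), isClopen_biInter_finset fun s _ => s.2.1, ?_, ?_⟩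
  · exact subset_iInter₂ fun s _ => s.2.1.connectedComponent_subset s.2.2
  · intro z hz
    by_contra hzO
    have hmem := ht hzO
    simp only [mem_iUnion, mem_compl_iff, exists_prop] at hmem
    obtain ⟨s, hst, hzs⟩ := hmem
    exact hzs (mem_iInter₂.mp hz s hst)

/-- Set-level Šura-Bura: a bounded (compact-contained) component of a compact set `K`
is contained in a relatively clopen compact subset of `K` inside any open `O`. -/
theorem exists_relClopen_of_connectedComponentIn
    {α : Type*} [TopologicalSpace α] [T2Space α] {K O : Set α}
    (hK : IsCompact K) (hO : IsOpen O) {x : α} (hx : x ∈ K)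
    (h : connectedComponentIn K x ⊆ O) :
    ∃ Q V : Set α, IsOpen V ∧ Q = K ∩ V ∧ IsCompact Q ∧
      connectedComponentIn K x ⊆ Q ∧ Q ⊆ O := by
  haveI : CompactSpace K := isCompact_iff_compactSpace.mp hK
  have comp_eq : connectedComponentIn K x = (↑) '' connectedComponent (⟨x, hx⟩ : K) :=
    connectedComponentIn_eq_image hx
  have hO' : IsOpen (((↑) : K → α) ⁻¹' O) := hO.preimage continuous_subtype_val
  have hcs : connectedComponent (⟨x, hx⟩ : K) ⊆ ((↑) : K → α) ⁻¹' O := by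
    rw [← image_subset_iff, ← comp_eq]; exact h
  obtain ⟨Q', hQ'clopen, hsub1, hsub2⟩ :=
    exists_isClopen_subset_of_connectedComponent_subset hO' hcs
  obtain ⟨V, hV, hQ'eq⟩ := isOpen_induced_iff.mp hQ'clopen.isOpen
  refine ⟨(↑) '' Q', V, hV, ?_, ?_, ?_, ?_⟩
  · rw [← hQ'eq, Subtype.image_preimage_coe]
  · exact (hQ'clopen.isClosed.isCompact).image continuous_subtype_val
  · rw [comp_eq]; exact image_mono hsub1
  · rw [image_subset_iff]; exact hsub2

/-- If `F` is closed and the component of `x` in `F` is bounded (in a proper space),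
then there is a bounded open set `W ∋ x` whose frontier avoids `F`. -/
theorem exists_bounded_open_frontier_disjoint
    {α : Type*} [NormedAddCommGroup α] [NormedSpace ℝ α] [ProperSpace α]
    {F : Set α} (hF : IsClosed F) {x : α} (hx : x ∈ F)
    (hb : IsBounded (connectedComponentIn F x)) :
    ∃ W : Set α, IsOpen W ∧ IsBounded W ∧ x ∈ W ∧ frontier W ∩ F = ∅ := by
  obtain ⟨ρ, hρ0, hUρ⟩ := hb.subset_ball_lt 0 0
  set Z : Set α := F ∩ closedBall 0 (ρ + 1) with hZdef
  have hZc : IsCompact Z :=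
    isCompact_of_isClosed_isBounded (hF.inter isClosed_closedBall)
      (isBounded_closedBall.subset inter_subset_right)
  have hxZ : x ∈ Z := by
    refine ⟨hx, ?_⟩
    have : x ∈ ball (0 : α) ρ := hUρ (mem_connectedComponentIn hx)
    exact closedBall_subset_closedBall (le_add_of_nonneg_right zero_le_one) (ball_subset_closedBall this)
  have hcomp_eq : connectedComponentIn Z x = connectedComponentIn F x := by
    apply Subset.antisymm (connectedComponentIn_mono x inter_subset_left)
    exact isPreconnected_connectedComponentIn.subset_connectedComponentIn
      (mem_connectedComponentIn hx)
      (fun y hy => ⟨connectedComponentIn_subset F x hy,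
        mem_closedBall.mpr (le_of_lt (lt_of_lt_of_le
          (mem_ball.mp (hUρ hy)) (le_add_of_nonneg_right zero_le_one)))⟩)
  have hcompO : connectedComponentIn Z x ⊆ ball 0 ρ := by rw [hcomp_eq]; exact hUρ
  obtain ⟨Q, V, hV, hQeq, hQc, hUQ, hQO⟩ :=
    exists_relClopen_of_connectedComponentIn hZc isOpen_ball hxZ hcompO
  -- the closed set to separate from Q
  set C : Set α := (Z \ Q) ∪ (ball (0 : α) ρ)ᶜ with hCdef
  have hCclosed : IsClosed C := by
    apply IsClosed.union
    · rw [hQeq]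
      rw [diff_self_inter, diff_eq]
      exact (hZc.isClosed).inter hV.isClosed_compl
    · exact isOpen_ball.isClosed_compl
  have hQCdisj : Disjoint Q C := by
    rw [disjoint_union_right]
    constructor
    · exact disjoint_sdiff_self_right.mono_left (le_refl _)
    · exact disjoint_compl_right.mono_left hQO
  obtain ⟨δ, hδ0, hδ⟩ := hQc.exists_thickening_subset_open hCclosed.isOpen_compl
    (subset_compl_iff_disjoint_right.mpr hQCdisj)
  refine ⟨thickening (δ/2) Q, isOpen_thickening, hQc.isBounded.thickening, ?_, ?_⟩
  · exact self_subset_thickening (by linarith) Q (hUQ (by rw [hcomp_eq]; exact mem_connectedComponentIn hx))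
  · rw [eq_empty_iff_forall_notMem]
    rintro p ⟨hpfr, hpF⟩
    have hpW : p ∉ thickening (δ/2) Q := by
      have := (isOpen_thickening (δ := δ/2) (E := Q)).frontier_eq ▸ hpfr
      exact fun hc => (this.2 hc)
    have hpC : p ∉ C := by
      intro hpC
      have : p ∈ cthickening (δ/2) Q :=
        closure_thickening_subset_cthickening _ _ (frontier_subset_closure hpfr)
      have : p ∈ thickening δ Q := cthickening_subset_thickening' hδ0 (by linarith) Q this
      exact (hδ this) hpC
    have hpball : p ∈ ball (0 : α) ρ := by
      by_contra hc; exact hpC (Or.inr hc)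
    have hpZ : p ∈ Z := ⟨hpF, ball_subset_closedBall.trans
      (closedBall_subset_closedBall (by linarith)) hpball⟩
    have : p ∈ Q := by
      by_contra hc; exact hpC (Or.inl ⟨hpZ, hc⟩)
    exact hpW (self_subset_thickening (by linarith) Q this)

/-- The topological hull `T(E)`: the union of `E` with all bounded connected
components of its complement. -/
def topHull {m : ℕ} (E : Set (EuclideanSpace ℝ (Fin m))) : Set (EuclideanSpace ℝ (Fin m)) :=
  E ∪ {x | IsBounded (connectedComponentIn Eᶜ x)}

/-- The covering property (1a): for each `R > R₀` there exist `r_n → ∞` with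
`B(0, r_n) ⊆ T(f^n(B(0,R)))`. -/
def CoveringProperty {m : ℕ} (f : EuclideanSpace ℝ (Fin m) → EuclideanSpace ℝ (Fin m))
    (R₀ : ℝ) : Prop :=
  ∀ R > R₀, ∃ r : ℕ → ℝ, Tendsto r atTop atTop ∧
    ∀ n : ℕ, ball (0 : EuclideanSpace ℝ (Fin m)) (r n) ⊆ topHull (f^[n] '' ball 0 R)

/-- The fast escaping set defined via radius `R`:
`A(f) = {x : ∃ L, ∀ n, f^{n+L}(x) ∉ T(f^n(B(0,R)))}`. -/
def fastEscaping {m : ℕ} (f : EuclideanSpace ℝ (Fin m) → EuclideanSpace ℝ (Fin m))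
    (R : ℝ) : Set (EuclideanSpace ℝ (Fin m)) :=
  {x | ∃ L : ℕ, ∀ n : ℕ, f^[n + L] x ∉ topHull (f^[n] '' ball (0 : EuclideanSpace ℝ (Fin m)) R)}

variable {m : ℕ}

theorem topHull_mono {E F : Set (EuclideanSpace ℝ (Fin m))} (h : E ⊆ F) :
    topHull E ⊆ topHull F := by
  rintro z (hz | hz)
  · exact Or.inl (h hz)
  · by_cases hzF : z ∈ F
    · exact Or.inl hzF
    · exact Or.inr ((show IsBounded (connectedComponentIn Eᶜ z) from hz).subset
        (connectedComponentIn_mono z (compl_subset_compl.mpr h)))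

theorem topHull_subset_topHull {S G : Set (EuclideanSpace ℝ (Fin m))}
    (h : S ⊆ topHull G) : topHull S ⊆ topHull G := by
  rintro z (hz | hz)
  · exact h hz
  · by_cases hzG : z ∈ topHull G
    · exact hzG
    · exfalso
      have hzG' : z ∈ Gᶜ := fun hc => hzG (Or.inl hc)
      have hC : ¬ IsBounded (connectedComponentIn Gᶜ z) := fun hb => hzG (Or.inr hb)
      have hCS : connectedComponentIn Gᶜ z ⊆ Sᶜ := by
        intro c hc hcS
        rcases h hcS with h1 | h2
        · exact (connectedComponentIn_subset Gᶜ z hc) h1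
        · exact hC ((connectedComponentIn_eq hc) ▸ h2)
      exact hC ((show IsBounded (connectedComponentIn Sᶜ z) from hz).subset
        (isPreconnected_connectedComponentIn.subset_connectedComponentIn
          (mem_connectedComponentIn hzG') hCS))

/-- Maximum principle for continuous open maps: the image of a bounded open set is
contained in the topological hull of the image of its frontier. -/
theorem image_subset_topHull_image_frontier
    {f : EuclideanSpace ℝ (Fin m) → EuclideanSpace ℝ (Fin m)}
    (hf : Continuous f) (hopen : IsOpenMap f)
    {W : Set (EuclideanSpace ℝ (Fin m))} (hWo : IsOpen W) (hWb : IsBounded W) :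
    f '' W ⊆ topHull (f '' frontier W) := by
  rintro y ⟨w, hwW, rfl⟩
  by_cases hy : f w ∈ f '' frontier W
  · exact Or.inl hy
  refine Or.inr ?_
  show IsBounded (connectedComponentIn (f '' frontier W)ᶜ (f w))
  by_contra hunb
  have hclK : IsCompact (closure W) :=
    isCompact_of_isClosed_isBounded isClosed_closure hWb.closure
  have hK : IsCompact (f '' closure W) := hclK.image hf
  have hsubcl : closure (f '' W) ⊆ f '' closure W :=
    closure_minimal (image_mono subset_closure) hK.isClosed
  have hfrsub : frontier (f '' W) ⊆ f '' frontier W := by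
    intro z hz
    have hz2 : z ∉ f '' W := by
      rw [(hopen W hWo).frontier_eq] at hz
      exact hz.2
    have hz3 : z ∈ f '' closure W := hsubcl (frontier_subset_closure hz)
    rw [closure_eq_self_union_frontier, image_union] at hz3
    exact hz3.resolve_left hz2
  set V := connectedComponentIn (f '' frontier W)ᶜ (f w) with hVdef
  have hfwV : f w ∈ V := mem_connectedComponentIn hy
  have hVsub : V ⊆ (f '' W) ∪ (closure (f '' W))ᶜ := by
    intro z hzV
    by_cases hc : z ∈ closure (f '' W)
    · rw [closure_eq_self_union_frontier] at hc
      rcases hc with h1 | h2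
      · exact Or.inl h1
      · exact absurd (hfrsub h2) (connectedComponentIn_subset _ _ hzV)
    · exact Or.inr hc
  have hVnotin : ¬ V ⊆ closure (f '' W) := by
    intro hsub
    exact hunb ((hK.isBounded.subset hsubcl).subset hsub)
  obtain ⟨v, hvV, hvn⟩ := not_subset.mp hVnotin
  obtain ⟨p, _, hp⟩ := isPreconnected_connectedComponentIn
    (f '' W) (closure (f '' W))ᶜ (hopen W hWo) isClosed_closure.isOpen_compl
    hVsub ⟨f w, hfwV, mem_image_of_mem f hwW⟩ ⟨v, hvV, hvn⟩
  exact hp.2 (subset_closure hp.1)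

theorem image_topHull_subset
    {f : EuclideanSpace ℝ (Fin m) → EuclideanSpace ℝ (Fin m)}
    (hf : Continuous f) (hopen : IsOpenMap f)
    {E : Set (EuclideanSpace ℝ (Fin m))} (hE : IsOpen E) :
    f '' topHull E ⊆ topHull (f '' E) := by
  rintro y ⟨x, hx, rfl⟩
  by_cases hxE : x ∈ E
  · exact Or.inl (mem_image_of_mem f hxE)
  rcases hx with hx1 | hxb
  · exact absurd hx1 hxE
  obtain ⟨W, hWo, hWb, hxW, hWfr⟩ :=
    exists_bounded_open_frontier_disjoint hE.isClosed_compl (hxE : x ∈ Eᶜ) hxb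
  have hfrE : frontier W ⊆ E := by
    intro p hp
    by_contra hpE
    exact (eq_empty_iff_forall_notMem.mp hWfr p) ⟨hp, hpE⟩
  exact topHull_mono (image_mono hfrE)
    (image_subset_topHull_image_frontier hf hopen hWo hWb (mem_image_of_mem f hxW))

theorem isOpenMap_iterate {α : Type*} [TopologicalSpace α] {f : α → α}
    (hopen : IsOpenMap f) : ∀ n, IsOpenMap f^[n] := by
  intro n
  induction n with
  | zero => exact IsOpenMap.id
  | succ n ih => rw [Function.iterate_succ']; exact hopen.comp ih

theorem iterate_image_topHull_subset
    {f : EuclideanSpace ℝ (Fin m) → EuclideanSpace ℝ (Fin m)}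
    (hf : Continuous f) (hopen : IsOpenMap f)
    {E : Set (EuclideanSpace ℝ (Fin m))} (hE : IsOpen E) (n : ℕ) :
    f^[n] '' topHull E ⊆ topHull (f^[n] '' E) := by
  induction n with
  | zero => simp
  | succ n ih =>
    rw [Function.iterate_succ', image_comp, image_comp]
    calc f '' (f^[n] '' topHull E) ⊆ f '' topHull (f^[n] '' E) := image_mono ih
      _ ⊆ topHull (f '' (f^[n] '' E)) :=
        image_topHull_subset hf hopen (isOpenMap_iterate hopen n E hE)

theorem fastEscaping_completely_invariant {m : ℕ}
    (f : EuclideanSpace ℝ (Fin m) → EuclideanSpace ℝ (Fin m))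
    (hf : Continuous f) (hopen : IsOpenMap f)
    (R₀ : ℝ) (hcov : CoveringProperty f R₀)
    (R : ℝ) (hR : R₀ < R) (x : EuclideanSpace ℝ (Fin m)) :
    x ∈ fastEscaping f R ↔ f x ∈ fastEscaping f R := by
  obtain ⟨r, htends, hsub⟩ := hcov R hR
  constructor
  · rintro ⟨L, hL⟩
    -- choose N ≥ 1 with r N > R
    obtain ⟨N, hrN, hN1⟩ := ((htends.eventually_gt_atTop R).and (eventually_ge_atTop 1)).exists
    obtain ⟨M, rfl⟩ : ∃ M, N = M + 1 := ⟨N - 1, by omega⟩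
    set B : Set (EuclideanSpace ℝ (Fin m)) := ball 0 R with hBdef
    have hNsub : B ⊆ topHull (f^[M + 1] '' B) :=
      (ball_subset_ball hrN.le).trans (hsub (M + 1))
    have hmono : ∀ n, topHull (f^[n] '' B) ⊆ topHull (f^[n + (M + 1)] '' B) := by
      intro n
      apply topHull_subset_topHull
      calc f^[n] '' B ⊆ f^[n] '' topHull (f^[M + 1] '' B) := image_mono hNsub
        _ ⊆ topHull (f^[n] '' (f^[M + 1] '' B)) :=
          iterate_image_topHull_subset hf hopen
            (isOpenMap_iterate hopen (M + 1) _ isOpen_ball) n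
        _ = topHull (f^[n + (M + 1)] '' B) := by
          rw [← image_comp, ← Function.iterate_add f n (M + 1)]
    refine ⟨L + M, fun n hmem => ?_⟩
    have h2 := hmono n hmem
    have heq : f^[n + (L + M)] (f x) = f^[(n + (M + 1)) + L] x := by
      calc f^[n + (L + M)] (f x) = f^[n + (L + M) + 1] x :=
            (Function.iterate_succ_apply f _ x).symm
        _ = f^[(n + (M + 1)) + L] x := by rw [show n + (L + M) + 1 = (n + (M + 1)) + L by omega]
    exact hL (n + (M + 1)) (heq ▸ h2)
  · rintro ⟨L, hL⟩
    refine ⟨L + 1, fun n hmem => hL n ?_⟩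
    rwa [show n + (L + 1) = (n + L) + 1 from rfl, Function.iterate_succ_apply] at hmem
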